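/- Let 2 ≤ l ≤ 8. Then the group of K-isometries of L_l coincides with the Weyl group W_l; that is, every ℤ-linear automorphism of L_l preserving B and fixing k is a product of reflections s_d with d ∈ Φ_l, and conversely every element of W_l preserves B and fixes k. -/

import Mathlib

def interForm (l : ℕ) (x y : Fin (l + 1) → ℤ) : ℤ :=
  ∑ i : Fin (l + 1), (if i = 0 then 1 else -1) * x i * y i

def canonClass (l : ℕ) : Fin (l + 1) → ℤ := fun i => if i = 0 then -3 else 1

namespace KIso


open Finset

variable {l : ℕ}

lemma iF_comm (x y : Fin (l+1) → ℤ) : interForm l x y = interForm l y x :=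
  Finset.sum_congr rfl fun i _ => by ring

lemma iF_add_right (x y z : Fin (l+1) → ℤ) :
    interForm l x (y + z) = interForm l x y + interForm l x z := by
  unfold interForm
  rw [← Finset.sum_add_distrib]
  exact Finset.sum_congr rfl fun i _ => by simp only [Pi.add_apply]; split <;> ring

lemma iF_smul_right (c : ℤ) (x y : Fin (l+1) → ℤ) :
    interForm l x (c • y) = c * interForm l x y := by
  unfold interForm
  rw [Finset.mul_sum]
  exact Finset.sum_congr rfl fun i _ => by simp [Pi.smul_apply, smul_eq_mul]; ring

lemma iF_add_left (x y z : Fin (l+1) → ℤ) :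
    interForm l (x + y) z = interForm l x z + interForm l y z := by
  rw [iF_comm, iF_add_right, iF_comm z x, iF_comm z y]

lemma iF_smul_left (c : ℤ) (x y : Fin (l+1) → ℤ) :
    interForm l (c • x) y = c * interForm l x y := by
  rw [iF_comm, iF_smul_right, iF_comm]

lemma iF_sub_right (x y z : Fin (l+1) → ℤ) :
    interForm l x (y - z) = interForm l x y - interForm l x z := by
  have := iF_add_right x z (y - z); simp at this; omega

lemma iF_sub_left (x y z : Fin (l+1) → ℤ) :
    interForm l (x - y) z = interForm l x z - interForm l y z := by
  rw [iF_comm, iF_sub_right, iF_comm z x, iF_comm z y]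

/-- The reflection in `d` as a linear map. -/
def reflLM (d : Fin (l+1) → ℤ) : (Fin (l+1) → ℤ) →ₗ[ℤ] (Fin (l+1) → ℤ) where
  toFun x := x + interForm l d x • d
  map_add' x y := by rw [iF_add_right, add_smul]; abel
  map_smul' c x := by
    simp only [iF_smul_right, RingHom.id_apply, smul_add, smul_smul, mul_comm]

lemma reflLM_invol (d : Fin (l+1) → ℤ) (hd : interForm l d d = -2) (x : Fin (l+1) → ℤ) :
    reflLM d (reflLM d x) = x := by
  simp only [reflLM, LinearMap.coe_mk, AddHom.coe_mk]
  rw [iF_add_right, iF_smul_right, hd]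
  module

/-- The reflection in a root `d` as a linear equivalence. -/
def reflE (d : Fin (l+1) → ℤ) (hd : interForm l d d = -2) :
    (Fin (l+1) → ℤ) ≃ₗ[ℤ] (Fin (l+1) → ℤ) :=
  LinearEquiv.ofLinear (reflLM d) (reflLM d)
    (LinearMap.ext (reflLM_invol d hd)) (LinearMap.ext (reflLM_invol d hd))

lemma reflE_apply (d : Fin (l+1) → ℤ) (hd : interForm l d d = -2) (x : Fin (l+1) → ℤ) :
    reflE d hd x = x + interForm l d x • d := rfl

/-- The generating set of reflections. -/
def genSet (l : ℕ) : Set ((Fin (l + 1) → ℤ) ≃ₗ[ℤ] (Fin (l + 1) → ℤ)) :=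
  {ψ | ∃ d : Fin (l + 1) → ℤ, interForm l d d = -2 ∧ interForm l d (canonClass l) = 0 ∧
      ∀ x, ψ x = x + interForm l d x • d}

lemma reflE_mem (d : Fin (l+1) → ℤ) (hd : interForm l d d = -2)
    (hk : interForm l d (canonClass l) = 0) : reflE d hd ∈ genSet l :=
  ⟨d, hd, hk, fun _ => rfl⟩

def IsKIso (l : ℕ) (φ : (Fin (l + 1) → ℤ) ≃ₗ[ℤ] (Fin (l + 1) → ℤ)) : Prop :=
  (∀ x y, interForm l (φ x) (φ y) = interForm l x y) ∧ φ (canonClass l) = canonClass l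

lemma isKIso_of_mem_gen {ψ} (h : ψ ∈ genSet l) : IsKIso l ψ := by
  obtain ⟨d, hd, hk, hψ⟩ := h
  constructor
  · intro x y
    rw [hψ x, hψ y, iF_add_left, iF_add_right, iF_add_right, iF_smul_left, iF_smul_right,
      iF_smul_right, iF_smul_left, hd, iF_comm d x]
    ring
  · rw [hψ, iF_comm] at *
    rw [hk]; simp

lemma isKIso_mul {φ ψ} (hφ : IsKIso l φ) (hψ : IsKIso l ψ) : IsKIso l (φ * ψ) := by
  refine ⟨fun x y => ?_, ?_⟩
  · show interForm l (φ (ψ x)) (φ (ψ y)) = _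
    rw [hφ.1, hψ.1]
  · show φ (ψ _) = _
    rw [hψ.2, hφ.2]

lemma isKIso_one : IsKIso l 1 := ⟨fun _ _ => rfl, rfl⟩

lemma isKIso_inv {φ} (hφ : IsKIso l φ) : IsKIso l φ⁻¹ := by
  refine ⟨fun x y => ?_, ?_⟩
  · conv_rhs => rw [show x = φ (φ⁻¹ x) from (φ.apply_symm_apply x).symm,
      show y = φ (φ⁻¹ y) from (φ.apply_symm_apply y).symm]
    rw [hφ.1]
  · conv_lhs => rw [← hφ.2]
    exact φ.symm_apply_apply _

lemma isKIso_of_mem_closure {φ} (h : φ ∈ Subgroup.closure (genSet l)) : IsKIso l φ := by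
  induction h using Subgroup.closure_induction with
  | mem ψ hψ => exact isKIso_of_mem_gen hψ
  | one => exact isKIso_one
  | mul _ _ _ _ h1 h2 => exact isKIso_mul h1 h2
  | inv _ _ h1 => exact isKIso_inv h1



lemma int_le_sq (c : ℤ) : c ≤ c ^ 2 := by
  rcases le_or_gt c 0 with h | h
  · nlinarith [sq_nonneg c]
  · nlinarith

lemma iF_expand (x y : Fin (l+1) → ℤ) :
    interForm l x y = x 0 * y 0 - ∑ i : Fin l, x i.succ * y i.succ := by
  unfold interForm
  rw [Fin.sum_univ_succ]
  have h1 : ∀ i : Fin l, ((if i.succ = (0 : Fin (l+1)) then (1:ℤ) else -1) * x i.succ * y i.succ)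
      = -(x i.succ * y i.succ) := fun i => by
    simp [Fin.succ_ne_zero]
  rw [Finset.sum_congr rfl fun i _ => h1 i, Finset.sum_neg_distrib]
  simp
  ring

lemma canon_zero : canonClass l 0 = -3 := by simp [canonClass]

lemma canon_succ (i : Fin l) : canonClass l i.succ = 1 := by
  simp [canonClass, Fin.succ_ne_zero]

lemma iF_canon (x : Fin (l+1) → ℤ) :
    interForm l x (canonClass l) = -3 * x 0 - ∑ i : Fin l, x i.succ := by
  rw [iF_expand]
  simp only [canon_zero, canon_succ, mul_one]
  ring

lemma iF_self (x : Fin (l+1) → ℤ) :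
    interForm l x x = x 0 ^ 2 - ∑ i : Fin l, x i.succ ^ 2 := by
  rw [iF_expand]
  simp only [sq]

lemma exc_sums {E : Fin (l+1) → ℤ} (h1 : interForm l E E = -1)
    (h2 : interForm l E (canonClass l) = -1) :
    (∑ i : Fin l, E i.succ ^ 2 = E 0 ^ 2 + 1) ∧ (∑ i : Fin l, E i.succ = 1 - 3 * E 0) := by
  rw [iF_self] at h1
  rw [iF_canon] at h2
  constructor <;> omega

lemma exc_bounds (h8 : l ≤ 8) {E : Fin (l+1) → ℤ}
    (h1 : ∑ i : Fin l, E i.succ ^ 2 = E 0 ^ 2 + 1)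
    (h2 : ∑ i : Fin l, E i.succ = 1 - 3 * E 0) : 0 ≤ E 0 ∧ E 0 ≤ 7 := by
  have cs := sq_sum_le_card_mul_sum_sq (s := (univ : Finset (Fin l)))
    (f := fun i : Fin l => E i.succ)
  rw [card_univ, Fintype.card_fin, h1, h2] at cs
  have h8' : (l : ℤ) ≤ 8 := by exact_mod_cast h8
  have hpos : (0:ℤ) ≤ E 0 ^ 2 + 1 := by positivity
  have hle8 : (l : ℤ) * (E 0 ^ 2 + 1) ≤ 8 * (E 0 ^ 2 + 1) :=
    mul_le_mul_of_nonneg_right h8' hpos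
  have hprod : (E 0 + 1) * (E 0 - 7) ≤ 0 := by nlinarith
  have hrange : -1 ≤ E 0 ∧ E 0 ≤ 7 := by
    rcases mul_nonpos_iff.mp hprod with ⟨ha, hb⟩ | ⟨ha, hb⟩ <;> constructor <;> omega
  refine ⟨?_, hrange.2⟩
  rcases hrange.1.lt_or_eq with h | h
  · omega
  · exfalso
    have hle : ∑ i : Fin l, E i.succ ≤ ∑ i : Fin l, E i.succ ^ 2 :=
      Finset.sum_le_sum fun i _ => int_le_sq _
    rw [h1, h2, ← h] at hle
    norm_num at hle

lemma exc_coord_nonpos (h8 : l ≤ 8) {E : Fin (l+1) → ℤ}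
    (h1 : ∑ i : Fin l, E i.succ ^ 2 = E 0 ^ 2 + 1)
    (h2 : ∑ i : Fin l, E i.succ = 1 - 3 * E 0) (ha : 1 ≤ E 0) (j : Fin l) : E j.succ ≤ 0 := by
  by_contra hcon
  push_neg at hcon
  have hb : 1 ≤ E j.succ := hcon
  have hl : 1 ≤ l := j.pos
  have hs1 : ∑ i ∈ univ.erase j, E i.succ = (1 - 3 * E 0) - E j.succ := by
    rw [Finset.sum_erase_eq_sub (mem_univ j), h2]
  have hs2 : ∑ i ∈ univ.erase j, E i.succ ^ 2 = (E 0 ^ 2 + 1) - E j.succ ^ 2 := by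
    rw [Finset.sum_erase_eq_sub (mem_univ j), h1]
  have cs := sq_sum_le_card_mul_sum_sq (s := univ.erase j) (f := fun i : Fin l => E i.succ)
  rw [hs1, hs2, Finset.card_erase_of_mem (mem_univ j), card_univ, Fintype.card_fin] at cs
  have hcard : ((l - 1 : ℕ) : ℤ) = (l : ℤ) - 1 := by push_cast [hl]; ring
  rw [hcard] at cs
  have h8' : (l : ℤ) ≤ 8 := by exact_mod_cast h8
  have hq0 : (0:ℤ) ≤ ∑ i ∈ univ.erase j, E i.succ ^ 2 :=
    Finset.sum_nonneg fun i _ => sq_nonneg _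
  rw [hs2] at hq0
  have hle7 : ((l:ℤ) - 1) * (E 0 ^ 2 + 1 - E j.succ ^ 2) ≤ 7 * (E 0 ^ 2 + 1 - E j.succ ^ 2) :=
    mul_le_mul_of_nonneg_right (by linarith) hq0
  nlinarith [sq_nonneg (E 0 - 1), sq_nonneg (E j.succ - 1),
    mul_nonneg (by linarith : (0:ℤ) ≤ E 0 - 1) (by linarith : (0:ℤ) ≤ E j.succ - 1)]




lemma iF_single_left (s : Fin (l+1)) (c : ℤ) (y : Fin (l+1) → ℤ) :
    interForm l (Pi.single s c) y = (if s = 0 then 1 else -1) * (c * y s) := by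
  unfold interForm
  rw [Finset.sum_eq_single s]
  · rw [Pi.single_eq_same]; ring
  · intro b _ hb; rw [Pi.single_eq_of_ne hb]; ring
  · intro h; exact absurd (mem_univ s) h

lemma iF_quad (p q r : Fin (l+1)) (hp : p ≠ 0) (hq : q ≠ 0) (hr : r ≠ 0)
    (y : Fin (l+1) → ℤ) :
    interForm l (Pi.single 0 1 - Pi.single p 1 - Pi.single q 1 - Pi.single r 1) y
      = y 0 + y p + y q + y r := by
  rw [iF_sub_left, iF_sub_left, iF_sub_left, iF_single_left, iF_single_left, iF_single_left,
    iF_single_left]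
  simp only [if_pos rfl, if_neg hp, if_neg hq, if_neg hr]
  norm_num

lemma iF_pair (p q : Fin (l+1)) (hp : p ≠ 0) (hq : q ≠ 0) (y : Fin (l+1) → ℤ) :
    interForm l (Pi.single p 1 - Pi.single q 1) y = -(y p) + y q := by
  rw [iF_sub_left, iF_single_left, iF_single_left]
  simp only [if_neg hp, if_neg hq]
  ring

lemma noether_arith (a A B C R Q : ℤ) (ha : 1 ≤ a) (ha7 : a ≤ 7) (hC : 0 ≤ C) (hCB : C ≤ B)
    (hBA : B ≤ A) (hsum : A + B + C ≤ a) (hR : 0 ≤ R) (hsum2 : A + B + C + R = 3 * a - 1)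
    (hQ : Q ≤ C * R) (hQ2 : A ^ 2 + B ^ 2 + C ^ 2 + Q = a ^ 2 + 1) : False := by
  have hR' : R = 3 * a - 1 - A - B - C := by omega
  subst hR'
  have key : a ^ 2 + 1 - A ^ 2 - B ^ 2 - C ^ 2 ≤ C * (3 * a - 1 - A - B - C) := by omega
  have hB0 : 0 ≤ B := by omega
  have hA0 : 0 ≤ A := by omega
  have hAa : A ≤ a := by omega
  clear hQ hQ2 hsum2 hR
  interval_cases a <;> interval_cases A <;> interval_cases B <;> interval_cases C <;> omega

lemma noether (h3 : 3 ≤ l) {E : Fin (l+1) → ℤ}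
    (h1 : ∑ i : Fin l, E i.succ ^ 2 = E 0 ^ 2 + 1)
    (h2 : ∑ i : Fin l, E i.succ = 1 - 3 * E 0)
    (hm : ∀ i : Fin l, E i.succ ≤ 0)
    (ha : 1 ≤ E 0) (ha7 : E 0 ≤ 7) :
    ∃ i j k : Fin l, i ≠ j ∧ i ≠ k ∧ j ≠ k ∧
      E i.succ + E j.succ + E k.succ ≤ -(E 0) - 1 := by
  set m : Fin l → ℤ := fun i => -(E i.succ) with hmdef
  have hm0 : ∀ i, 0 ≤ m i := fun i => by simp [hmdef]; exact hm i
  have hms : ∑ i : Fin l, m i = 3 * E 0 - 1 := by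
    simp only [hmdef, Finset.sum_neg_distrib, h2]; ring
  have hms2 : ∑ i : Fin l, m i ^ 2 = E 0 ^ 2 + 1 := by
    simp only [hmdef, neg_sq]; exact h1
  have : Nonempty (Fin l) := ⟨⟨0, by omega⟩⟩
  obtain ⟨i, -, hi⟩ := Finset.exists_max_image (univ : Finset (Fin l)) m univ_nonempty
  have hcard1 : (univ.erase i).card = l - 1 := by
    rw [Finset.card_erase_of_mem (mem_univ i), card_univ, Fintype.card_fin]
  obtain ⟨j, hj1, hj⟩ := Finset.exists_max_image (univ.erase i) m
    (Finset.card_pos.mp (by omega))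
  have hcard2 : ((univ.erase i).erase j).card = l - 2 := by
    rw [Finset.card_erase_of_mem hj1, hcard1]; omega
  obtain ⟨k, hk1, hk⟩ := Finset.exists_max_image ((univ.erase i).erase j) m
    (Finset.card_pos.mp (by omega))
  have hji : j ≠ i := (Finset.mem_erase.mp hj1).1
  have hkj : k ≠ j := (Finset.mem_erase.mp hk1).1
  have hki : k ≠ i := (Finset.mem_erase.mp (Finset.mem_of_mem_erase hk1)).1
  refine ⟨i, j, k, fun h => hji h.symm, fun h => hki h.symm, fun h => hkj h.symm, ?_⟩
  by_contra hcon
  push_neg at hcon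
  -- hcon : -(E 0) - 1 < E i.succ + E j.succ + E k.succ, i.e. m i + m j + m k ≤ E 0
  have hABC : m i + m j + m k ≤ E 0 := by simp only [hmdef] at *; omega
  set R : ℤ := ∑ t ∈ ((univ.erase i).erase j).erase k, m t with hR
  set Q : ℤ := ∑ t ∈ ((univ.erase i).erase j).erase k, m t ^ 2 with hQ
  have hsplit : m i + m j + m k + R = 3 * E 0 - 1 := by
    rw [hR, ← hms]
    rw [← Finset.add_sum_erase _ m (mem_univ i), ← Finset.add_sum_erase _ m hj1,
      ← Finset.add_sum_erase _ m hk1]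
    ring
  have hsplit2 : m i ^ 2 + m j ^ 2 + m k ^ 2 + Q = E 0 ^ 2 + 1 := by
    rw [hQ, ← hms2]
    rw [← Finset.add_sum_erase _ (fun t => m t ^ 2) (mem_univ i),
      ← Finset.add_sum_erase _ (fun t => m t ^ 2) hj1,
      ← Finset.add_sum_erase _ (fun t => m t ^ 2) hk1]
    ring
  have hQR : Q ≤ m k * R := by
    rw [hQ, hR, Finset.mul_sum]
    refine Finset.sum_le_sum fun t ht => ?_
    have h1t : m t ≤ m k := hk t (Finset.mem_of_mem_erase ht)
    nlinarith [hm0 t]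
  have hR0 : (0:ℤ) ≤ R := Finset.sum_nonneg fun t _ => hm0 t
  exact noether_arith (E 0) (m i) (m j) (m k) R Q ha ha7 (hm0 k)
    (hj k (Finset.mem_of_mem_erase hk1)) (hi j (mem_univ j)) hABC hR0 hsplit hQR hsplit2


lemma fin_last_ne_zero (hl : 1 ≤ l) : (Fin.last l : Fin (l+1)) ≠ 0 := by
  intro h
  have := congrArg Fin.val h
  simp [Fin.last] at this
  omega

lemma canon_last (hl : 1 ≤ l) : canonClass l (Fin.last l) = 1 := by
  simp [canonClass, fin_last_ne_zero hl]

lemma int_one_le_sq {c : ℤ} (hc : c ≠ 0) : 1 ≤ c ^ 2 := by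
  rcases lt_trichotomy c 0 with h | h | h
  · nlinarith
  · exact absurd h hc
  · nlinarith

lemma trans_base (hl : 1 ≤ l) {E : Fin (l+1) → ℤ}
    (h1 : ∑ i : Fin l, E i.succ ^ 2 = E 0 ^ 2 + 1)
    (h2 : ∑ i : Fin l, E i.succ = 1 - 3 * E 0)
    (ha : E 0 = 0) :
    ∃ w ∈ Subgroup.closure (genSet l), w E = Pi.single (Fin.last l) 1 := by
  rw [ha] at h1 h2
  norm_num at h1 h2
  have hex : ∃ i : Fin l, E i.succ ≠ 0 := by
    by_contra hc
    push_neg at hc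
    rw [Finset.sum_eq_zero (fun i _ => hc i)] at h2
    norm_num at h2
  obtain ⟨i, hi⟩ := hex
  have hsq1 : 1 ≤ E i.succ ^ 2 := int_one_le_sq hi
  have hrest : ∑ t ∈ univ.erase i, E t.succ ^ 2 = 1 - E i.succ ^ 2 := by
    rw [Finset.sum_erase_eq_sub (mem_univ i), h1]
  have hrest0 : ∀ t ∈ univ.erase i, E t.succ = 0 := by
    have hz : ∑ t ∈ univ.erase i, E t.succ ^ 2 = 0 := by
      have hnn : 0 ≤ ∑ t ∈ univ.erase i, E t.succ ^ 2 :=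
        Finset.sum_nonneg fun t _ => sq_nonneg _
      omega
    intro t ht
    have := (Finset.sum_eq_zero_iff_of_nonneg (fun t _ => sq_nonneg (E t.succ))).mp hz t ht
    exact pow_eq_zero_iff (by norm_num) |>.mp this
  have hEi : E i.succ = 1 := by
    have : ∑ t ∈ univ.erase i, E t.succ = 0 := Finset.sum_eq_zero hrest0
    have hsp := Finset.add_sum_erase univ (fun t : Fin l => E t.succ) (mem_univ i)
    simp only [h2] at hsp
    omega
  have hEeq : E = Pi.single i.succ 1 := by
    funext t
    induction t using Fin.cases with
    | zero => rw [ha, Pi.single_eq_of_ne (Fin.succ_ne_zero i).symm]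
    | succ j =>
      by_cases hji : j = i
      · subst hji; rw [hEi, Pi.single_eq_same]
      · rw [hrest0 j (Finset.mem_erase.mpr ⟨hji, mem_univ j⟩),
          Pi.single_eq_of_ne (fun h => hji (Fin.succ_inj.mp h))]
  by_cases hlast : i.succ = Fin.last l
  · refine ⟨1, one_mem _, ?_⟩
    show E = Pi.single (Fin.last l) 1
    rw [hEeq, hlast]
  · set d : Fin (l+1) → ℤ := Pi.single i.succ 1 - Pi.single (Fin.last l) 1 with hd
    have hl0 := fin_last_ne_zero hl
    have hP := iF_pair i.succ (Fin.last l) (Fin.succ_ne_zero i) hl0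
    have hne1 : i.succ ≠ Fin.last l := hlast
    have hne2 : Fin.last l ≠ i.succ := Ne.symm hlast
    have hdis : d i.succ = 1 := by simp [hd, Pi.single_apply, hne1, hne2]
    have hdl : d (Fin.last l) = -1 := by simp [hd, Pi.single_apply, hne1, hne2]
    have hdd : interForm l d d = -2 := by rw [hP d, hdis, hdl]; ring
    have hdk : interForm l d (canonClass l) = 0 := by
      rw [hP, canon_succ, canon_last hl]; ring
    refine ⟨reflE d hdd, Subgroup.subset_closure (reflE_mem d hdd hdk), ?_⟩
    rw [reflE_apply, hEeq, hP, Pi.single_eq_same, Pi.single_eq_of_ne (Ne.symm hlast), hd]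
    have : (-(1:ℤ) + 0) = -1 := by ring
    rw [this]
    module

lemma transitivity (h3 : 3 ≤ l) (h8 : l ≤ 8) :
    ∀ (n : ℕ) (E : Fin (l+1) → ℤ), (E 0).toNat ≤ n → interForm l E E = -1 →
      interForm l E (canonClass l) = -1 →
      ∃ w ∈ Subgroup.closure (genSet l), w E = Pi.single (Fin.last l) 1 := by
  intro n
  induction n with
  | zero =>
    intro E hn hE1 hE2
    obtain ⟨h1, h2⟩ := exc_sums hE1 hE2
    have := (exc_bounds h8 h1 h2).1
    exact trans_base (by omega) h1 h2 (by omega)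
  | succ n ih =>
    intro E hn hE1 hE2
    obtain ⟨h1, h2⟩ := exc_sums hE1 hE2
    obtain ⟨hb0, hb7⟩ := exc_bounds h8 h1 h2
    rcases eq_or_lt_of_le hb0 with ha0 | ha1
    · exact trans_base (by omega) h1 h2 ha0.symm
    · obtain ⟨i, j, k, hij, hik, hjk, hiq⟩ := noether h3 h1 h2
        (exc_coord_nonpos h8 h1 h2 ha1) ha1 hb7
      set d : Fin (l+1) → ℤ := Pi.single 0 1 - Pi.single i.succ 1 - Pi.single j.succ 1
        - Pi.single k.succ 1 with hd
      have hsi := Fin.succ_ne_zero i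
      have hsj := Fin.succ_ne_zero j
      have hsk := Fin.succ_ne_zero k
      have hij' : i.succ ≠ j.succ := fun h => hij (Fin.succ_inj.mp h)
      have hik' : i.succ ≠ k.succ := fun h => hik (Fin.succ_inj.mp h)
      have hjk' : j.succ ≠ k.succ := fun h => hjk (Fin.succ_inj.mp h)
      have hQ := iF_quad i.succ j.succ k.succ hsi hsj hsk
      have hz1 : (0 : Fin (l+1)) ≠ i.succ := hsi.symm
      have hz2 : (0 : Fin (l+1)) ≠ j.succ := hsj.symm
      have hz3 : (0 : Fin (l+1)) ≠ k.succ := hsk.symm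
      have hd0 : d 0 = 1 := by simp [hd, Pi.single_apply, hz1, hz2, hz3]
      have hdi : d i.succ = -1 := by
        simp [hd, Pi.single_apply, hsi, hij', hik', hij'.symm, hik'.symm]
      have hdj : d j.succ = -1 := by
        simp [hd, Pi.single_apply, hsj, hij'.symm, hjk', hij', hjk'.symm]
      have hdk' : d k.succ = -1 := by
        simp [hd, Pi.single_apply, hsk, hik'.symm, hjk'.symm, hik', hjk']
      have hdd : interForm l d d = -2 := by rw [hQ d, hd0, hdi, hdj, hdk']; ring
      have hdkc : interForm l d (canonClass l) = 0 := by
        rw [hQ, canon_zero, canon_succ, canon_succ, canon_succ]; ring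
      have hmem := reflE_mem d hdd hdkc
      have hIso := isKIso_of_mem_gen hmem
      set E' := reflE d hdd E with hE'
      have hE'1 : interForm l E' E' = -1 := (hIso.1 E E).trans hE1
      have hE'2 : interForm l E' (canonClass l) = -1 := by
        rw [hE']
        conv_lhs => rw [← hIso.2]
        exact (hIso.1 E _).trans hE2
      have hc : interForm l d E ≤ -1 := by rw [hQ E]; omega
      have hE'0 : E' 0 = E 0 + interForm l d E := by
        rw [hE', reflE_apply]
        simp [Pi.add_apply, Pi.smul_apply, smul_eq_mul, hd0]
      obtain ⟨h1', h2'⟩ := exc_sums hE'1 hE'2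
      have hb0' := (exc_bounds h8 h1' h2').1
      have hlt : (E' 0).toNat ≤ n := by omega
      obtain ⟨w', hw', hwE'⟩ := ih E' hlt hE'1 hE'2
      refine ⟨w' * reflE d hdd, mul_mem hw' (Subgroup.subset_closure hmem), ?_⟩
      show w' (reflE d hdd E) = _
      rw [← hE'] at *
      exact hwE'

lemma iF_single_right (s : Fin (l+1)) (c : ℤ) (y : Fin (l+1) → ℤ) :
    interForm l y (Pi.single s c) = (if s = 0 then 1 else -1) * (c * y s) := by
  rw [iF_comm, iF_single_left]

section Ext
variable {n : ℕ}

def snocZ (x : Fin (n+1) → ℤ) (a : ℤ) : Fin (n+2) → ℤ := Fin.snoc x a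

lemma snocZ_castSucc (x : Fin (n+1) → ℤ) (a : ℤ) (i : Fin (n+1)) :
    snocZ x a i.castSucc = x i := by unfold snocZ; rw [Fin.snoc_castSucc]

lemma snocZ_last (x : Fin (n+1) → ℤ) (a : ℤ) : snocZ x a (Fin.last (n+1)) = a := by
  unfold snocZ; rw [Fin.snoc_last]

lemma init_snocZ (x : Fin (n+1) → ℤ) (a : ℤ) : Fin.init (snocZ x a) = x := by
  unfold snocZ; simp

lemma snocZ_init (x : Fin (n+2) → ℤ) : snocZ (Fin.init x) (x (Fin.last (n+1))) = x := by
  unfold snocZ; rw [Fin.snoc_init_self]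

lemma snocZ_init_zero {x : Fin (n+2) → ℤ} (h : x (Fin.last (n+1)) = 0) :
    snocZ (Fin.init x) 0 = x := by rw [← h, snocZ_init]

lemma snocZ_add (x y : Fin (n+1) → ℤ) (a b : ℤ) :
    snocZ x a + snocZ y b = snocZ (x + y) (a + b) := by
  funext t
  induction t using Fin.lastCases with
  | last => simp [snocZ_last]
  | cast i => simp [snocZ_castSucc]

lemma snocZ_smul (c : ℤ) (x : Fin (n+1) → ℤ) (a : ℤ) :
    c • snocZ x a = snocZ (c • x) (c * a) := by
  funext t
  induction t using Fin.lastCases with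
  | last => simp [snocZ_last]
  | cast i => simp [snocZ_castSucc]

lemma iF_snocZ (x y : Fin (n+1) → ℤ) (a b : ℤ) :
    interForm (n+1) (snocZ x a) (snocZ y b) = interForm n x y - a * b := by
  unfold interForm
  rw [Fin.sum_univ_castSucc]
  have h1 : ∀ i : Fin (n+1),
      (if i.castSucc = 0 then (1:ℤ) else -1) * snocZ x a i.castSucc * snocZ y b i.castSucc
        = (if i = 0 then 1 else -1) * x i * y i := by
    intro i
    rw [snocZ_castSucc, snocZ_castSucc]
    simp [Fin.castSucc_eq_zero_iff]
  rw [Finset.sum_congr rfl fun i _ => h1 i, snocZ_last, snocZ_last,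
    if_neg (fin_last_ne_zero (by omega))]
  ring

lemma canon_snocZ : canonClass (n+1) = snocZ (canonClass n) 1 := by
  funext t
  induction t using Fin.lastCases with
  | last => rw [snocZ_last, canon_last (by omega)]
  | cast i =>
    rw [snocZ_castSucc]
    simp [canonClass, Fin.castSucc_eq_zero_iff]

def extLM (f : (Fin (n+1) → ℤ) →ₗ[ℤ] (Fin (n+1) → ℤ)) :
    (Fin (n+2) → ℤ) →ₗ[ℤ] (Fin (n+2) → ℤ) where
  toFun x := snocZ (f (Fin.init x)) (x (Fin.last (n+1)))
  map_add' x y := by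
    have hinit : Fin.init (x + y) = Fin.init x + Fin.init y := rfl
    rw [hinit, map_add, snocZ_add]
    rfl
  map_smul' c x := by
    have hinit : Fin.init (c • x) = c • Fin.init x := rfl
    simp only [RingHom.id_apply]
    rw [hinit, map_smul, snocZ_smul]
    rfl

lemma extLM_cancel (f g : (Fin (n+1) → ℤ) →ₗ[ℤ] (Fin (n+1) → ℤ))
    (h : ∀ v, g (f v) = v) (x : Fin (n+2) → ℤ) : extLM g (extLM f x) = x := by
  show snocZ (g (Fin.init (snocZ (f (Fin.init x)) (x (Fin.last _))))) _ = x
  rw [init_snocZ, h]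
  show snocZ (Fin.init x) (snocZ (f (Fin.init x)) (x (Fin.last _)) (Fin.last _)) = x
  rw [snocZ_last, snocZ_init]

def extE (ψ : (Fin (n+1) → ℤ) ≃ₗ[ℤ] (Fin (n+1) → ℤ)) :
    (Fin (n+2) → ℤ) ≃ₗ[ℤ] (Fin (n+2) → ℤ) :=
  LinearEquiv.ofLinear (extLM ψ.toLinearMap) (extLM ψ.symm.toLinearMap)
    (LinearMap.ext fun x => extLM_cancel _ _ (fun v => ψ.apply_symm_apply v) x)
    (LinearMap.ext fun x => extLM_cancel _ _ (fun v => ψ.symm_apply_apply v) x)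

lemma extE_apply (ψ : (Fin (n+1) → ℤ) ≃ₗ[ℤ] (Fin (n+1) → ℤ)) (x : Fin (n+2) → ℤ) :
    extE ψ x = snocZ (ψ (Fin.init x)) (x (Fin.last (n+1))) := rfl

lemma extE_mul (ψ χ : (Fin (n+1) → ℤ) ≃ₗ[ℤ] (Fin (n+1) → ℤ)) :
    extE (ψ * χ) = extE ψ * extE χ := by
  refine LinearEquiv.ext fun x => ?_
  show extE (ψ * χ) x = extE ψ (extE χ x)
  rw [extE_apply, extE_apply, extE_apply, init_snocZ, snocZ_last]
  rfl

lemma extE_one : extE (1 : (Fin (n+1) → ℤ) ≃ₗ[ℤ] (Fin (n+1) → ℤ)) = 1 :=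
  LinearEquiv.ext fun x => by
    rw [extE_apply]
    show snocZ (Fin.init x) (x (Fin.last (n+1))) = x
    exact snocZ_init x

lemma extE_mem_closure (ψ : (Fin (n+1) → ℤ) ≃ₗ[ℤ] (Fin (n+1) → ℤ))
    (h : ψ ∈ Subgroup.closure (genSet n)) :
    extE ψ ∈ Subgroup.closure (genSet (n+1)) := by
  induction h using Subgroup.closure_induction with
  | mem χ hχ =>
    obtain ⟨d, hdd, hdk, hact⟩ := hχ
    refine Subgroup.subset_closure ⟨snocZ d 0, ?_, ?_, ?_⟩
    · rw [iF_snocZ, hdd]; ring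
    · rw [canon_snocZ, iF_snocZ, hdk]; ring
    · intro x
      rw [extE_apply, hact]
      have hBx : interForm (n+1) (snocZ d 0) x = interForm n d (Fin.init x) := by
        conv_lhs => rw [← snocZ_init x]
        rw [iF_snocZ]; ring
      rw [hBx]
      conv_rhs => rw [← snocZ_init x]
      have hsm : interForm n d (Fin.init x) • snocZ d (0:ℤ)
          = snocZ (interForm n d (Fin.init x) • d) 0 := by
        rw [snocZ_smul]; norm_num
      rw [init_snocZ, hsm, snocZ_add, add_zero]
  | one => rw [extE_one]; exact one_mem _
  | mul a b _ _ ha hb => rw [extE_mul]; exact mul_mem ha hb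
  | inv a _ ha =>
    have he : extE a⁻¹ = (extE a)⁻¹ :=
      eq_inv_of_mul_eq_one_left (by rw [← extE_mul, inv_mul_cancel, extE_one])
    rw [he]; exact inv_mem ha

def resLM (f : (Fin (n+2) → ℤ) →ₗ[ℤ] (Fin (n+2) → ℤ)) :
    (Fin (n+1) → ℤ) →ₗ[ℤ] (Fin (n+1) → ℤ) where
  toFun v := Fin.init (f (snocZ v 0))
  map_add' v w := by
    have h : snocZ (v + w) (0:ℤ) = snocZ v 0 + snocZ w 0 := by rw [snocZ_add]; norm_num
    rw [h, map_add]
    rfl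
  map_smul' c v := by
    have h : snocZ (c • v) (0:ℤ) = c • snocZ v 0 := by rw [snocZ_smul]; norm_num
    simp only [RingHom.id_apply]
    rw [h, map_smul]
    rfl

lemma step_restrict (φ : (Fin (n+2) → ℤ) ≃ₗ[ℤ] (Fin (n+2) → ℤ)) (hφ : IsKIso (n+1) φ)
    (hfix : φ (Pi.single (Fin.last (n+1)) 1) = Pi.single (Fin.last (n+1)) 1) :
    ∃ ψ : (Fin (n+1) → ℤ) ≃ₗ[ℤ] (Fin (n+1) → ℤ), IsKIso n ψ ∧ φ = extE ψ := by
  have hl0 : (Fin.last (n+1) : Fin (n+2)) ≠ 0 := fin_last_ne_zero (by omega)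
  have hcoord : ∀ x, φ x (Fin.last (n+1)) = x (Fin.last (n+1)) := by
    intro x
    have h1 := hφ.1 x (Pi.single (Fin.last (n+1)) 1)
    rw [hfix, iF_single_right, iF_single_right, if_neg hl0] at h1
    linarith
  have hsymmfix : φ.symm (Pi.single (Fin.last (n+1)) 1) = Pi.single (Fin.last (n+1)) 1 := by
    conv_lhs => rw [← hfix]
    exact φ.symm_apply_apply _
  have hcoordsymm : ∀ x, φ.symm x (Fin.last (n+1)) = x (Fin.last (n+1)) := by
    intro x
    have := hcoord (φ.symm x)
    rw [φ.apply_symm_apply] at this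
    exact this.symm
  have hzero1 : ∀ v : Fin (n+1) → ℤ, φ (snocZ v 0) (Fin.last (n+1)) = 0 := by
    intro v; rw [hcoord, snocZ_last]
  have hzero2 : ∀ v : Fin (n+1) → ℤ, φ.symm (snocZ v 0) (Fin.last (n+1)) = 0 := by
    intro v; rw [hcoordsymm, snocZ_last]
  have hc1 : ∀ v, resLM φ.symm.toLinearMap (resLM φ.toLinearMap v) = v := by
    intro v
    show Fin.init (φ.symm (snocZ (Fin.init (φ (snocZ v 0))) 0)) = v
    rw [snocZ_init_zero (hzero1 v), φ.symm_apply_apply, init_snocZ]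
  have hc2 : ∀ v, resLM φ.toLinearMap (resLM φ.symm.toLinearMap v) = v := by
    intro v
    show Fin.init (φ (snocZ (Fin.init (φ.symm (snocZ v 0))) 0)) = v
    rw [snocZ_init_zero (hzero2 v), φ.apply_symm_apply, init_snocZ]
  set ψ : (Fin (n+1) → ℤ) ≃ₗ[ℤ] (Fin (n+1) → ℤ) :=
    LinearEquiv.ofLinear (resLM φ.toLinearMap) (resLM φ.symm.toLinearMap)
      (LinearMap.ext hc2) (LinearMap.ext hc1) with hψ
  have hψapp : ∀ v, ψ v = Fin.init (φ (snocZ v 0)) := fun v => rfl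
  have hφψ : ∀ v, φ (snocZ v 0) = snocZ (ψ v) 0 := by
    intro v
    rw [hψapp]
    exact (snocZ_init_zero (hzero1 v)).symm
  have hdecomp : ∀ x : Fin (n+2) → ℤ,
      x = snocZ (Fin.init x) 0 + x (Fin.last (n+1)) • Pi.single (Fin.last (n+1)) 1 := by
    intro x
    funext t
    induction t using Fin.lastCases with
    | last => simp [snocZ_last, Pi.single_eq_same]
    | cast i =>
      have hne : i.castSucc ≠ Fin.last (n+1) := (Fin.castSucc_lt_last i).ne
      simp [snocZ_castSucc, Pi.single_eq_of_ne hne]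
      rfl
  refine ⟨ψ, ⟨?_, ?_⟩, ?_⟩
  · intro v w
    have h := hφ.1 (snocZ v 0) (snocZ w 0)
    rw [hφψ, hφψ, iF_snocZ, iF_snocZ] at h
    linarith
  · have hc := hφ.2
    rw [canon_snocZ] at hc
    have hsplit : snocZ (canonClass n) (1:ℤ)
        = snocZ (canonClass n) 0 + Pi.single (Fin.last (n+1)) 1 := by
      funext t
      induction t using Fin.lastCases with
      | last => simp [snocZ_last, Pi.single_eq_same]
      | cast i =>
        have hne : i.castSucc ≠ Fin.last (n+1) := (Fin.castSucc_lt_last i).ne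
        simp [snocZ_castSucc, Pi.single_eq_of_ne hne]
    rw [hsplit, map_add, hfix, hφψ] at hc
    have h2 := add_right_cancel hc
    have h3 := congrArg Fin.init h2
    rw [init_snocZ, init_snocZ] at h3
    exact h3
  · refine LinearEquiv.ext fun x => ?_
    rw [extE_apply]
    conv_lhs => rw [hdecomp x]
    rw [map_add, map_smul, hfix, hφψ]
    funext t
    induction t using Fin.lastCases with
    | last => simp [snocZ_last, Pi.single_eq_same]
    | cast i =>
      have hne : i.castSucc ≠ Fin.last (n+1) := (Fin.castSucc_lt_last i).ne
      simp [snocZ_castSucc, Pi.single_eq_of_ne hne]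

end Ext

section Base2

lemma iF3 (x y : Fin 3 → ℤ) : interForm 2 x y = x 0 * y 0 - x 1 * y 1 - x 2 * y 2 := by
  rw [iF_expand, Fin.sum_univ_two]
  have e1 : (0 : Fin 2).succ = (1 : Fin 3) := rfl
  have e2 : (1 : Fin 2).succ = (2 : Fin 3) := rfl
  rw [e1, e2]
  ring

lemma classify3 {v : Fin 3 → ℤ} (h1 : v 0 * v 0 - v 1 * v 1 - v 2 * v 2 = -1)
    (h2 : 3 * v 0 + v 1 + v 2 = 1) :
    (v 0 = 0 ∧ v 1 = 1 ∧ v 2 = 0) ∨ (v 0 = 0 ∧ v 1 = 0 ∧ v 2 = 1) ∨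
      (v 0 = 1 ∧ v 1 = -1 ∧ v 2 = -1) := by
  have hb0 : 0 ≤ v 0 := by nlinarith [sq_nonneg (v 1 - v 2), sq_nonneg (v 1 + v 2)]
  have hb1 : v 0 ≤ 1 := by nlinarith [sq_nonneg (v 1 - v 2), sq_nonneg (v 1 + v 2)]
  rcases (by omega : v 0 = 0 ∨ v 0 = 1) with h | h
  · have hs : v 1 + v 2 = 1 := by omega
    have hq : v 1 * v 1 + v 2 * v 2 = 1 := by linear_combination -h1 + v 0 * h
    have hp2 : 2 * (v 1 * v 2) = 0 := by linear_combination (v 1 + v 2 + 1) * hs - hq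
    have hp : v 1 * v 2 = 0 := by linarith
    rcases mul_eq_zero.mp hp with h' | h'
    · right; left; exact ⟨h, h', by omega⟩
    · left; exact ⟨h, by omega, h'⟩
  · right; right
    have hs : v 1 + v 2 = -2 := by omega
    have hq : v 1 * v 1 + v 2 * v 2 = 2 := by linear_combination -h1 + (v 0 + 1) * h
    have hd : (v 1 - v 2) * (v 1 - v 2) = 0 := by
      linear_combination 2 * hq - (v 1 + v 2 - 2) * hs
    have h12 : v 1 - v 2 = 0 := mul_self_eq_zero.mp hd
    exact ⟨h, by omega, by omega⟩

lemma pi3_ext {x y : Fin 3 → ℤ} (h0 : x 0 = y 0) (h1 : x 1 = y 1) (h2 : x 2 = y 2) :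
    x = y := by
  funext t
  fin_cases t
  · exact h0
  · exact h1
  · exact h2

lemma base2 (φ : (Fin 3 → ℤ) ≃ₗ[ℤ] (Fin 3 → ℤ)) (hφ : IsKIso 2 φ) :
    φ ∈ Subgroup.closure (genSet 2) := by
  set P0 : Fin 3 → ℤ := Pi.single 0 1 with hP0
  set P1 : Fin 3 → ℤ := Pi.single 1 1 with hP1
  set P2 : Fin 3 → ℤ := Pi.single 2 1 with hP2
  have p00 : P0 0 = 1 := rfl
  have p01 : P0 1 = 0 := rfl
  have p02 : P0 2 = 0 := rfl
  have p10 : P1 0 = 0 := rfl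
  have p11 : P1 1 = 1 := rfl
  have p12 : P1 2 = 0 := rfl
  have p20 : P2 0 = 0 := rfl
  have p21 : P2 1 = 0 := rfl
  have p22 : P2 2 = 1 := rfl
  have c0 : canonClass 2 0 = -3 := rfl
  have c1 : canonClass 2 1 = 1 := rfl
  have c2 : canonClass 2 2 = 1 := rfl
  -- conditions on v := φ P2
  have hvv : interForm 2 (φ P2) (φ P2) = -1 := by
    rw [hφ.1, iF3, p20, p21, p22]; ring
  have hvk : interForm 2 (φ P2) (canonClass 2) = -1 := by
    conv_lhs => rw [← hφ.2]
    rw [hφ.1, iF3, p20, p21, p22, c0, c1, c2]; ring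
  have hww : interForm 2 (φ P1) (φ P1) = -1 := by
    rw [hφ.1, iF3, p10, p11, p12]; ring
  have hwk : interForm 2 (φ P1) (canonClass 2) = -1 := by
    conv_lhs => rw [← hφ.2]
    rw [hφ.1, iF3, p10, p11, p12, c0, c1, c2]; ring
  have hvw : interForm 2 (φ P2) (φ P1) = 0 := by
    rw [hφ.1, iF3, p20, p21, p22, p10, p11, p12]; ring
  rw [iF3] at hvv hvk hww hwk hvw
  rw [c0, c1, c2] at hvk hwk
  have hv := classify3 hvv (by linarith)
  have hw := classify3 hww (by linarith)
  -- the canonical class relation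
  have hcanon : canonClass 2 = (-3 : ℤ) • P0 + P1 + P2 := by
    funext t
    fin_cases t <;> rfl
  have hkey := hφ.2
  rw [hcanon, map_add, map_add, map_smul] at hkey
  -- rule out impossible combinations using hvw
  rcases hv with ⟨hv0, hv1, hv2⟩ | ⟨hv0, hv1, hv2⟩ | ⟨hv0, hv1, hv2⟩ <;>
    rcases hw with ⟨hw0, hw1, hw2⟩ | ⟨hw0, hw1, hw2⟩ | ⟨hw0, hw1, hw2⟩ <;>
      rw [hv0, hv1, hv2, hw0, hw1, hw2] at hvw <;> try norm_num at hvw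
  -- Case A: φ P2 = P1, φ P1 = P2 (the swap)
  · have hφP2 : φ P2 = P1 :=
      pi3_ext (hv0.trans p10.symm) (hv1.trans p11.symm) (hv2.trans p12.symm)
    have hφP1 : φ P1 = P2 :=
      pi3_ext (hw0.trans p20.symm) (hw1.trans p21.symm) (hw2.trans p22.symm)
    rw [hφP1, hφP2] at hkey
    have h3 : (-3 : ℤ) • φ P0 = (-3 : ℤ) • P0 := by
      have h' := hkey
      rw [add_assoc, add_assoc, add_comm P2 P1] at h'
      exact add_right_cancel h'
    have hφP0 : φ P0 = P0 := smul_right_injective _ (by norm_num : (-3:ℤ) ≠ 0) h3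
    -- φ is the reflection in P1 - P2
    have hne1 : (1 : Fin 3) ≠ 0 := by decide
    have hne2 : (2 : Fin 3) ≠ 0 := by decide
    have hPmain := iF_pair (l := 2) 1 2 hne1 hne2
    have hdd : interForm 2 (P1 - P2) (P1 - P2) = -2 := by
      rw [hPmain]
      have : (P1 - P2) 1 = 1 := by rw [Pi.sub_apply, p11, p21]; ring
      have h2 : (P1 - P2) 2 = -1 := by rw [Pi.sub_apply, p12, p22]; ring
      rw [this, h2]; ring
    have hdk : interForm 2 (P1 - P2) (canonClass 2) = 0 := by
      rw [hPmain, c1, c2]; ring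
    have hfeq : φ = reflE (P1 - P2) hdd := by
      refine LinearEquiv.toLinearMap_injective
        (Module.Basis.ext (Pi.basisFun ℤ (Fin 3)) fun i => ?_)
      have hb : ∀ j : Fin 3, (Pi.basisFun ℤ (Fin 3)) j = Pi.single j 1 := fun j => by
        simp [Pi.basisFun_apply]
      fin_cases i <;> rw [hb]
      · show φ P0 = reflE (P1 - P2) hdd P0
        rw [hφP0, reflE_apply, hPmain, p01, p02]
        norm_num
      · show φ P1 = reflE (P1 - P2) hdd P1
        rw [hφP1, reflE_apply, hPmain, p11, p12]
        have : P1 + (-(1:ℤ) + 0) • (P1 - P2) = P2 := by module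
        rw [this]
      · show φ P2 = reflE (P1 - P2) hdd P2
        rw [hφP2, reflE_apply, hPmain, p21, p22]
        have : P2 + (-(0:ℤ) + 1) • (P1 - P2) = P1 := by module
        rw [this]
    rw [hfeq]
    exact Subgroup.subset_closure (reflE_mem _ hdd hdk)
  -- Case B: φ P2 = P2, φ P1 = P1 (the identity)
  · have hφP2 : φ P2 = P2 :=
      pi3_ext (hv0.trans p20.symm) (hv1.trans p21.symm) (hv2.trans p22.symm)
    have hφP1 : φ P1 = P1 :=
      pi3_ext (hw0.trans p10.symm) (hw1.trans p11.symm) (hw2.trans p12.symm)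
    rw [hφP1, hφP2] at hkey
    have h3 : (-3 : ℤ) • φ P0 = (-3 : ℤ) • P0 :=
      add_right_cancel (add_right_cancel hkey)
    have hφP0 : φ P0 = P0 := smul_right_injective _ (by norm_num : (-3:ℤ) ≠ 0) h3
    have hfeq : φ = 1 := by
      refine LinearEquiv.toLinearMap_injective
        (Module.Basis.ext (Pi.basisFun ℤ (Fin 3)) fun i => ?_)
      have hb : ∀ j : Fin 3, (Pi.basisFun ℤ (Fin 3)) j = Pi.single j 1 := fun j => by
        simp [Pi.basisFun_apply]
      fin_cases i <;> rw [hb]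
      · exact hφP0
      · exact hφP1
      · exact hφP2
    rw [hfeq]
    exact one_mem _

end Base2

lemma rev_aux : ∀ m : ℕ, 2 ≤ m → m ≤ 8 →
    ∀ φ : (Fin (m+1) → ℤ) ≃ₗ[ℤ] (Fin (m+1) → ℤ), IsKIso m φ →
      φ ∈ Subgroup.closure (genSet m) := by
  intro m
  induction m with
  | zero => intro h; omega
  | succ p ih =>
    intro h2 h8 φ hφ
    rcases Nat.lt_or_ge p 2 with hp | hp
    · have hp1 : p = 1 := by omega
      subst hp1
      exact base2 φ hφ
    · have hl0 : (Fin.last (p+1) : Fin (p+2)) ≠ 0 := fin_last_ne_zero (by omega)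
      set elast : Fin (p+2) → ℤ := Pi.single (Fin.last (p+1)) 1 with helast
      have hE1 : interForm (p+1) (φ elast) (φ elast) = -1 := by
        rw [hφ.1, helast, iF_single_left, if_neg hl0, Pi.single_eq_same]
        ring
      have hE2 : interForm (p+1) (φ elast) (canonClass (p+1)) = -1 := by
        conv_lhs => rw [← hφ.2]
        rw [hφ.1, helast, iF_single_left, if_neg hl0, canon_last (by omega)]
        ring
      obtain ⟨w, hw, hwE⟩ := transitivity (by omega) (by omega) ((φ elast) 0).toNat
        (φ elast) le_rfl hE1 hE2
      have hψiso : IsKIso (p+1) (w * φ) := isKIso_mul (isKIso_of_mem_closure hw) hφ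
      have hψfix : (w * φ) elast = elast := by
        show w (φ elast) = elast
        rw [hwE]
      obtain ⟨ψ', hψ'iso, hψ'eq⟩ := step_restrict (w * φ) hψiso hψfix
      have hψ'mem := ih hp (by omega) ψ' hψ'iso
      have hmem2 : w * φ ∈ Subgroup.closure (genSet (p+1)) := by
        rw [hψ'eq]
        exact extE_mem_closure ψ' hψ'mem
      have hφeq : φ = w⁻¹ * (w * φ) := by group
      rw [hφeq]
      exact mul_mem (inv_mem hw) hmem2

end KIso

/-- For `2 ≤ l ≤ 8`, a ℤ-linear automorphism `φ` of `L_l` is a `K`-isometry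
(preserves `B` and fixes `k`) if and only if `φ` lies in the Weyl group, i.e.
the subgroup generated by the reflections `s_d : x ↦ x + B(d,x)·d`
for roots `d` (with `B(d,d) = -2` and `B(d,k) = 0`). -/
theorem kIsometries_eq_weylGroup (l : ℕ) (h2 : 2 ≤ l) (h8 : l ≤ 8)
    (φ : (Fin (l + 1) → ℤ) ≃ₗ[ℤ] (Fin (l + 1) → ℤ)) :
    ((∀ x y, interForm l (φ x) (φ y) = interForm l x y) ∧ φ (canonClass l) = canonClass l) ↔
      φ ∈ Subgroup.closure
        {ψ : (Fin (l + 1) → ℤ) ≃ₗ[ℤ] (Fin (l + 1) → ℤ) |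
          ∃ d : Fin (l + 1) → ℤ, interForm l d d = -2 ∧ interForm l d (canonClass l) = 0 ∧
            ∀ x, ψ x = x + interForm l d x • d} := by
  constructor
  · intro h
    exact KIso.rev_aux l h2 h8 φ h
  · intro h
    exact KIso.isKIso_of_mem_closure h
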